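/- Let (M,d) be a complete metric space, C a non-empty closed subset of M, and {x_n} a sequence Fejér monotone with respect to C. If there exists β ∈ [0,1) such that d(x_{n+1}, C) ≤ β d(x_n, C) for every n, then {x_n} converges linearly to some point x ∈ C; that is, there exist K ≥ 0 and α ∈ [0,1) such that d(x_n, x) ≤ K α^n for all n. -/

import Mathlib

theorem fejer_monotone_linear_convergence {M : Type*} [MetricSpace M] [CompleteSpace M]
    (C : Set M) (hC : C.Nonempty) (hCclosed : IsClosed C) (x : ℕ → M)
    (hFejer : ∀ z ∈ C, ∀ n : ℕ, dist (x (n + 1)) z ≤ dist (x n) z)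
    (β : ℝ) (hβ0 : 0 ≤ β) (hβ1 : β < 1)
    (hrate : ∀ n : ℕ, Metric.infDist (x (n + 1)) C ≤ β * Metric.infDist (x n) C) :
    ∃ p ∈ C, ∃ K : ℝ, 0 ≤ K ∧ ∃ α : ℝ, 0 ≤ α ∧ α < 1 ∧
      (∀ n : ℕ, dist (x n) p ≤ K * α ^ n) ∧ Filter.Tendsto x Filter.atTop (nhds p) := by
  set γ : ℝ := max β (1/2) with hγdef
  have hγ0 : (0:ℝ) < γ := lt_of_lt_of_le (by norm_num) (le_max_right _ _)
  have hγ1 : γ < 1 := max_lt hβ1 (by norm_num)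
  set d0 : ℝ := Metric.infDist (x 0) C with hd0
  have hd0nn : 0 ≤ d0 := Metric.infDist_nonneg
  -- geometric decay of infDist
  have hdecay : ∀ n : ℕ, Metric.infDist (x n) C ≤ γ ^ n * d0 := by
    intro n
    induction n with
    | zero => simp [hd0]
    | succ n ih =>
      calc Metric.infDist (x (n+1)) C ≤ β * Metric.infDist (x n) C := hrate n
        _ ≤ γ * (γ ^ n * d0) :=
            mul_le_mul (le_max_left _ _) ih Metric.infDist_nonneg hγ0.le
        _ = γ ^ (n+1) * d0 := by ring
  -- choose near points in C
  have hz : ∀ n : ℕ, ∃ z ∈ C, dist (x n) z < Metric.infDist (x n) C + γ ^ n := by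
    intro n
    have : Metric.infDist (x n) C < Metric.infDist (x n) C + γ ^ n := by
      have := pow_pos hγ0 n; linarith
    exact (Metric.infDist_lt_iff hC).mp this
  choose z hzC hzd using hz
  have hzb : ∀ n : ℕ, dist (x n) (z n) ≤ γ ^ n * (d0 + 1) := by
    intro n
    have h1 := hzd n
    have h2 := hdecay n
    have h3 : (0:ℝ) ≤ γ ^ n := (pow_pos hγ0 n).le
    nlinarith
  -- Fejér iterated
  have hFej' : ∀ w ∈ C, ∀ n m : ℕ, n ≤ m → dist (x m) w ≤ dist (x n) w := by
    intro w hw n m hnm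
    induction m, hnm using Nat.le_induction with
    | base => exact le_rfl
    | succ m hm ih => exact le_trans (hFejer w hw m) ih
  have hbound : ∀ n m : ℕ, n ≤ m → dist (x n) (x m) ≤ 2 * (d0 + 1) * γ ^ n := by
    intro n m hnm
    calc dist (x n) (x m) ≤ dist (x n) (z n) + dist (x m) (z n) := dist_triangle_right _ _ _
      _ ≤ γ ^ n * (d0+1) + γ ^ n * (d0+1) :=
          add_le_add (hzb n) (le_trans (hFej' (z n) (hzC n) n m hnm) (hzb n))
      _ = 2 * (d0 + 1) * γ ^ n := by ring
  have hcauchy : CauchySeq x := by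
    apply cauchySeq_of_le_geometric γ (2 * (d0 + 1)) hγ1
    intro n
    exact hbound n (n+1) (Nat.le_succ n)
  obtain ⟨p, hp⟩ := cauchySeq_tendsto_of_complete hcauchy
  -- distance bound to limit
  have hdistp : ∀ n : ℕ, dist (x n) p ≤ 2 * (d0 + 1) * γ ^ n := by
    intro n
    have htend : Filter.Tendsto (fun m => dist (x n) (x m)) Filter.atTop (nhds (dist (x n) p)) :=
      (tendsto_const_nhds.dist hp)
    refine le_of_tendsto htend ?_
    filter_upwards [Filter.eventually_ge_atTop n] with m hm
    exact hbound n m hm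
  -- p ∈ C
  have hinf0 : Filter.Tendsto (fun n => Metric.infDist (x n) C) Filter.atTop (nhds 0) := by
    apply squeeze_zero (fun n => Metric.infDist_nonneg) hdecay
    have := tendsto_pow_atTop_nhds_zero_of_lt_one hγ0.le hγ1
    simpa using this.mul_const d0
  have hinfp : Filter.Tendsto (fun n => Metric.infDist (x n) C) Filter.atTop
      (nhds (Metric.infDist p C)) :=
    ((Metric.continuous_infDist_pt C).tendsto p).comp hp
  have hpC : p ∈ C := by
    have h0 : Metric.infDist p C = 0 := tendsto_nhds_unique hinfp hinf0
    exact (IsClosed.mem_iff_infDist_zero hCclosed hC).mpr h0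
  exact ⟨p, hpC, 2 * (d0 + 1), by linarith, γ, hγ0.le, hγ1, hdistp, hp⟩
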